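/- Let {a_i}_{i∈ι} be an orthonormal basis of E, T > 0, L : ℝ → (E →ₗ[ℂ] E), and let v : ℝ → E be differentiable on [0,T] with ‖v t‖ = 1 and ⟨a_i, v t⟩ ≠ 0 for all i and all t ∈ [0,T], satisfying the normalized master equation v'(t) = L t (v t) − Re⟨v t, L t (v t)⟩ • v t. For each t let P_t be the rank-one operator x ↦ ⟨v t, x⟩ • v t and let L_cl t := Σ_i (⟨a_i, (L t ∘ P_t − P_t ∘ (L t)†) a_i⟩ / (2·|⟨a_i, v t⟩|²)) • P_{a_i}. Then for every t ∈ [0,T], each function s ↦ ‖⟨a_i, v s⟩‖ is differentiable at t and the variance of the non-classical part equals the squared speed of the amplitude moduli: ‖(L t − L_cl t)(v t)‖² − |⟨v t, (L t − L_cl t)(v t)⟩|² = Σ_i (deriv (fun s => ‖⟨a_i, v s⟩‖) t)². -/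

import Mathlib

open scoped ComplexConjugate

lemma rankOne_apply' {E : Type*} [NormedAddCommGroup E] [InnerProductSpace ℂ E]
    (u x : E) :
    ((LinearMap.toSpanSingleton ℂ E u).comp (innerSL ℂ u).toLinearMap) x
      = (inner ℂ u x : ℂ) • u := rfl

lemma parseval' {E : Type*} [NormedAddCommGroup E] [InnerProductSpace ℂ E]
    [FiniteDimensional ℂ E] {ι : Type*} [Fintype ι]
    (a : OrthonormalBasis ι ℂ E) (x : E) :
    ‖x‖ ^ 2 = ∑ i, ‖(inner ℂ (a i) x : ℂ)‖ ^ 2 := by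
  rw [← a.repr.norm_map x, EuclideanSpace.norm_eq, Real.sq_sqrt (by positivity)]
  simp [a.repr_apply_apply]

lemma norm_hasDerivAt' {c : ℝ → ℂ} {c' : ℂ} {t : ℝ} (h : HasDerivAt c c' t)
    (h0 : c t ≠ 0) :
    HasDerivAt (fun s => ‖c s‖) ((conj (c t) * c').re / ‖c t‖) t := by
  have hsq : HasDerivAt (fun s => ‖c s‖ ^ 2) (2 * (inner ℝ (c t) c' : ℝ)) t := h.norm_sq
  have hne : ‖c t‖ ^ 2 ≠ 0 := pow_ne_zero 2 (norm_ne_zero_iff.mpr h0)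
  have h2 := (Real.hasDerivAt_sqrt hne).comp t hsq
  have heq : (fun s => Real.sqrt (‖c s‖ ^ 2)) = fun s => ‖c s‖ := by
    funext s; rw [Real.sqrt_sq (norm_nonneg _)]
  rw [show ((fun x => Real.sqrt x) ∘ fun s => ‖c s‖ ^ 2) = fun s => ‖c s‖ from funext fun s => by simp [Real.sqrt_sq (norm_nonneg _)]] at h2
  refine h2.congr_deriv ?_
  rw [Real.sqrt_sq (norm_nonneg _), Complex.inner]
  field_simp

lemma aux_coord (x y R : ℂ) (hx : x ≠ 0) (hxc : conj x ≠ 0)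
    (hrc : R * 2 = conj x * y + x * conj y) :
    y - (conj x * y - x * conj y) / (2 * (conj x * x)) * x = R / conj x := by
  field_simp
  linear_combination (-1 : ℂ) * hrc

/-- The rank-one operator `x ↦ ⟨u, x⟩ • u`. -/
noncomputable def rankOne {E : Type*} [NormedAddCommGroup E] [InnerProductSpace ℂ E]
    (u : E) : E →ₗ[ℂ] E :=
  (LinearMap.toSpanSingleton ℂ E u).comp (innerSL ℂ u).toLinearMap

/-- The classical part `L_cl t` of the time-dependent Liouvillian `L t` relative to the
orthonormal basis `a` and the time-evolved state vector `v t`. -/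
noncomputable def classicalPartL {E : Type*} [NormedAddCommGroup E] [InnerProductSpace ℂ E]
    [FiniteDimensional ℂ E] {ι : Type*} [Fintype ι]
    (a : OrthonormalBasis ι ℂ E) (L : ℝ → (E →ₗ[ℂ] E)) (v : ℝ → E) (t : ℝ) : E →ₗ[ℂ] E :=
  ∑ i, ((inner ℂ (a i)
        ((L t ∘ₗ rankOne (v t) - rankOne (v t) ∘ₗ LinearMap.adjoint (L t)) (a i)) : ℂ) /
      (2 * (‖(inner ℂ (a i) (v t) : ℂ)‖ ^ 2 : ℂ))) • rankOne (a i)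

/-- The key pointwise identity in the proof of Theorem 2: the variance of the non-classical
part of the Liouvillian equals the squared speed of the amplitude moduli `|⟨a_i, v t⟩|`. -/
theorem refined_speed_equals_amplitude_speed
    {E : Type*} [NormedAddCommGroup E] [InnerProductSpace ℂ E] [FiniteDimensional ℂ E]
    {ι : Type*} [Fintype ι] (a : OrthonormalBasis ι ℂ E)
    (T : ℝ) (hT : 0 < T) (L : ℝ → (E →ₗ[ℂ] E)) (v : ℝ → E)
    (hnorm : ∀ t ∈ Set.Icc (0 : ℝ) T, ‖v t‖ = 1)
    (hne : ∀ i, ∀ t ∈ Set.Icc (0 : ℝ) T, (inner ℂ (a i) (v t) : ℂ) ≠ 0)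
    (hode : ∀ t ∈ Set.Icc (0 : ℝ) T,
      HasDerivAt v (L t (v t) - (inner ℂ (v t) (L t (v t)) : ℂ).re • v t) t) :
    ∀ t ∈ Set.Icc (0 : ℝ) T,
      (∀ i, DifferentiableAt ℝ (fun s => ‖(inner ℂ (a i) (v s) : ℂ)‖) t) ∧
      ‖(L t - classicalPartL a L v t) (v t)‖ ^ 2 -
          ‖(inner ℂ (v t) ((L t - classicalPartL a L v t) (v t)) : ℂ)‖ ^ 2 =
        ∑ i, (deriv (fun s => ‖(inner ℂ (a i) (v s) : ℂ)‖) t) ^ 2 := by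
  intro t ht
  set c : ι → ℂ := fun i => inner ℂ (a i) (v t) with hc
  set d : ι → ℂ := fun i => inner ℂ (a i) (L t (v t)) with hd
  set α : ℝ := (inner ℂ (v t) (L t (v t)) : ℂ).re with hα
  set r : ι → ℝ := fun i => (conj (c i) * d i).re with hr
  have hcne : ∀ i, c i ≠ 0 := fun i => hne i t ht
  have hncne : ∀ i, ‖c i‖ ≠ 0 := fun i => norm_ne_zero_iff.mpr (hcne i)
  -- derivative of coordinates
  have hderivc : ∀ i, HasDerivAt (fun s => (inner ℂ (a i) (v s) : ℂ)) (d i - (α : ℂ) * c i) t := by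
    intro i
    have h := ((innerSL ℂ (a i)).restrictScalars ℝ).hasFDerivAt.comp_hasDerivAt t (hode t ht)
    have hval : (inner ℂ (a i) ((L t) (v t) - (inner ℂ (v t) ((L t) (v t)) : ℂ).re • v t) : ℂ)
        = d i - (α : ℂ) * c i := by
      rw [inner_sub_right, RCLike.real_smul_eq_coe_smul (K := ℂ), inner_smul_right]; rfl
    rw [← hval]
    exact h
  have hderivn : ∀ i, HasDerivAt (fun s => ‖(inner ℂ (a i) (v s) : ℂ)‖)
      ((r i - α * ‖c i‖ ^ 2) / ‖c i‖) t := by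
    intro i
    have h1 : (conj (c i) * ((α : ℂ) * c i)).re = α * ‖c i‖ ^ 2 := by
      rw [show conj (c i) * ((α : ℂ) * c i) = (α : ℂ) * (conj (c i) * c i) by ring,
        RCLike.conj_mul]
      simp [← Complex.ofReal_pow]
    have key : (conj (c i) * (d i - (α : ℂ) * c i)).re = r i - α * ‖c i‖ ^ 2 := by
      rw [mul_sub, Complex.sub_re, h1, hr]
    have h : HasDerivAt (fun s => ‖(inner ℂ (a i) (v s) : ℂ)‖)
        ((conj (c i) * (d i - (α : ℂ) * c i)).re / ‖c i‖) t :=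
      norm_hasDerivAt' (hderivc i) (hcne i)
    rw [key] at h
    exact h
  refine ⟨fun i => (hderivn i).differentiableAt, ?_⟩
  have hconjne : ∀ i, conj (c i) ≠ 0 := by
    intro i h
    exact hcne i (by simpa using congrArg conj h)
  have hsum1 : ∑ i, ‖c i‖ ^ 2 = 1 := by
    have h := parseval' a (v t)
    rw [hnorm t ht] at h
    simpa using h.symm
  have halpha : α = ∑ i, r i := by
    have h := a.sum_inner_mul_inner (v t) (L t (v t))
    have h2 : (inner ℂ (v t) (L t (v t)) : ℂ) = ∑ i, conj (c i) * d i := by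
      rw [← h]
      refine Finset.sum_congr rfl fun i _ => ?_
      rw [← inner_conj_symm (v t) (a i)]
    rw [hα, h2, Complex.re_sum]
  set w := (L t - classicalPartL a L v t) (v t) with hw
  have hnum : ∀ i, (inner ℂ (a i)
      (((L t ∘ₗ rankOne (v t) - rankOne (v t) ∘ₗ LinearMap.adjoint (L t)) (a i))) : ℂ)
      = conj (c i) * d i - c i * conj (d i) := by
    intro i
    rw [LinearMap.sub_apply, inner_sub_right, LinearMap.comp_apply, LinearMap.comp_apply]
    congr 1
    · rw [show rankOne (v t) (a i) = (inner ℂ (v t) (a i) : ℂ) • v t from rfl, map_smul,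
        inner_smul_right, ← inner_conj_symm (v t) (a i)]
    · rw [show rankOne (v t) ((LinearMap.adjoint (L t)) (a i))
          = (inner ℂ (v t) ((LinearMap.adjoint (L t)) (a i)) : ℂ) • v t from rfl,
        inner_smul_right, LinearMap.adjoint_inner_right, ← inner_conj_symm (L t (v t)) (a i)]
      rw [mul_comm]
  have hwc : ∀ j, (inner ℂ (a j) w : ℂ) = (r j : ℂ) / conj (c j) := by
    intro j
    have hLcl : (inner ℂ (a j) ((classicalPartL a L v t) (v t)) : ℂ)
        = ((conj (c j) * d j - c j * conj (d j)) / (2 * (‖c j‖ : ℂ) ^ 2)) * c j := by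
      rw [classicalPartL, LinearMap.sum_apply, inner_sum]
      rw [Finset.sum_eq_single j]
      · rw [LinearMap.smul_apply, inner_smul_right, hnum,
          show rankOne (a j) (v t) = (inner ℂ (a j) (v t) : ℂ) • a j from rfl, inner_smul_right]
        have : (inner ℂ (a j) (a j) : ℂ) = 1 := by
          rw [inner_self_eq_norm_sq_to_K, a.orthonormal.1 j]; norm_num
        rw [this]
        ring
      · intro i _ hij
        rw [LinearMap.smul_apply, inner_smul_right,
          show rankOne (a i) (v t) = (inner ℂ (a i) (v t) : ℂ) • a i from rfl, inner_smul_right,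
          a.orthonormal.2 (Ne.symm hij)]
        ring
      · intro h
        exact absurd (Finset.mem_univ j) h
    have hwj : (inner ℂ (a j) w : ℂ)
        = d j - ((conj (c j) * d j - c j * conj (d j)) / (2 * (‖c j‖ : ℂ) ^ 2)) * c j := by
      rw [hw, LinearMap.sub_apply, inner_sub_right, hLcl]
    have hC : ((‖c j‖ : ℂ)) ^ 2 = conj (c j) * c j := (RCLike.conj_mul (c j)).symm
    have hrc : (r j : ℂ) * 2 = conj (c j) * d j + c j * conj (d j) := by
      have h := Complex.add_conj (conj (c j) * d j)
      rw [map_mul, Complex.conj_conj] at h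
      push_cast at h
      rw [mul_comm]
      exact h.symm
    rw [hwj, hC]
    exact aux_coord (c j) (d j) ((r j : ℝ) : ℂ) (hcne j) (hconjne j) hrc
  have hwnorm : ‖w‖ ^ 2 = ∑ i, (r i) ^ 2 / ‖c i‖ ^ 2 := by
    rw [parseval' a w]
    refine Finset.sum_congr rfl fun i _ => ?_
    rw [hwc i, norm_div, RCLike.norm_conj, Complex.norm_real, div_pow, Real.norm_eq_abs, sq_abs]
  have hvw : (inner ℂ (v t) w : ℂ) = ((α : ℝ) : ℂ) := by
    rw [← a.sum_inner_mul_inner (v t) w, halpha]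
    push_cast
    refine Finset.sum_congr rfl fun i _ => ?_
    rw [hwc i, ← inner_conj_symm (v t) (a i)]
    rw [show (inner ℂ (a i) (v t) : ℂ) = c i from rfl]
    rw [mul_div_cancel₀ _ (hconjne i)]
  have hvwnorm : ‖(inner ℂ (v t) w : ℂ)‖ ^ 2 = α ^ 2 := by
    rw [hvw, Complex.norm_real, Real.norm_eq_abs, sq_abs]
  rw [hwnorm, hvwnorm]
  have hRHS : ∑ i, (deriv (fun s => ‖(inner ℂ (a i) (v s) : ℂ)‖) t) ^ 2
      = ∑ i, ((r i) ^ 2 / ‖c i‖ ^ 2 - 2 * α * r i + α ^ 2 * ‖c i‖ ^ 2) := by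
    refine Finset.sum_congr rfl fun i _ => ?_
    rw [(hderivn i).deriv]
    have hn2 : ‖c i‖ ^ 2 ≠ 0 := pow_ne_zero 2 (hncne i)
    rw [div_pow, show (r i - α * ‖c i‖ ^ 2) ^ 2
        = (r i) ^ 2 - (2 * α * r i) * ‖c i‖ ^ 2 + (α ^ 2 * ‖c i‖ ^ 2) * ‖c i‖ ^ 2 by ring,
      add_div, sub_div, mul_div_cancel_right₀ _ hn2, mul_div_cancel_right₀ _ hn2]
  rw [hRHS, Finset.sum_add_distrib, Finset.sum_sub_distrib, ← Finset.mul_sum, ← Finset.mul_sum,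
    ← halpha, hsum1]
  ring
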